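/- Let R be a commutative ring and let C be a radical divisible conservative system of R that is noetherian. Then every proper C-ideal I is the intersection of a finite set of prime C-ideals none of which contains another, and this finite set is unique: it equals the set of C-components of I, i.e. the minimal elements (with respect to inclusion) of the set of prime C-ideals containing I. -/

import Mathlib

/-- The division ideal `I : s = {r ∈ R | r * s ∈ I}`. -/
def idealDiv {R : Type*} [CommRing R] (I : Ideal R) (s : R) : Ideal R where
  carrier := {r : R | r * s ∈ I}
  zero_mem' := by simp
  add_mem' := by
    intro a b ha hb
    simpa [add_mul] using I.add_mem ha hb
  smul_mem' := by
    intro c a ha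
    simp only [Set.mem_setOf_eq, smul_eq_mul] at *
    rw [mul_assoc]
    exact I.mul_mem_left c ha

/-- A conservative system of ideals of a commutative ring: a collection of ideals closed
under intersections of arbitrary subfamilies (the empty intersection being `⊤ = R`) and
under unions (suprema) of nonempty chains. -/
structure ConservativeSystem (R : Type*) [CommRing R] where
  carrier : Set (Ideal R)
  sInf_mem : ∀ S : Set (Ideal R), S ⊆ carrier → sInf S ∈ carrier
  chain_sSup_mem : ∀ S : Set (Ideal R), S ⊆ carrier → S.Nonempty →
    IsChain (· ≤ ·) S → sSup S ∈ carrier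

variable {R : Type*} [CommRing R]

/-- The `C`-ideal `C`-generated by a subset `A ⊆ R`: the intersection of all `C`-ideals
containing `A`. -/
def ConservativeSystem.gen (C : ConservativeSystem R) (A : Set R) : Ideal R :=
  sInf {I : Ideal R | I ∈ C.carrier ∧ A ⊆ (I : Set R)}

/-- A conservative system is radical if all of its members are radical ideals. -/
def ConservativeSystem.IsRadicalSystem (C : ConservativeSystem R) : Prop :=
  ∀ I ∈ C.carrier, I.IsRadical

/-- A conservative system is divisible if it is closed under division of ideals by elements. -/
def ConservativeSystem.IsDivisible (C : ConservativeSystem R) : Prop :=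
  ∀ I ∈ C.carrier, ∀ s : R, idealDiv I s ∈ C.carrier

/-- A conservative system is noetherian if every ascending chain of `C`-ideals stabilizes. -/
def ConservativeSystem.IsNoetherianSystem (C : ConservativeSystem R) : Prop :=
  ∀ f : ℕ → Ideal R, (∀ n, f n ∈ C.carrier) → Monotone f → ∃ N, ∀ n, N ≤ n → f n = f N

/-- A `C`-ideal is finitely `C`-generated if it is `C`-generated by a finite set. -/
def ConservativeSystem.FinitelyGen (C : ConservativeSystem R) (I : Ideal R) : Prop :=
  ∃ Fs : Finset R, I = C.gen (↑Fs : Set R)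


private lemma CS.exists_maximal (C : ConservativeSystem R)
    (hnoeth : C.IsNoetherianSystem) (S : Set (Ideal R)) (hS : S ⊆ C.carrier)
    (hne : S.Nonempty) : ∃ M ∈ S, ∀ J ∈ S, M ≤ J → J = M := by
  by_contra h
  push_neg at h
  obtain ⟨J0, hJ0⟩ := hne
  choose g hg1 hg2 hg3 using h
  let f : ℕ → {J : Ideal R // J ∈ S} := fun n =>
    Nat.rec ⟨J0, hJ0⟩ (fun _ p => ⟨g p.1 p.2, hg1 p.1 p.2⟩) n
  have hstep : ∀ n, (f n).1 < (f (n+1)).1 := fun n =>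
    lt_of_le_of_ne (hg2 (f n).1 (f n).2) (Ne.symm (hg3 (f n).1 (f n).2))
  have hmono : Monotone fun n => (f n).1 := monotone_nat_of_le_succ fun n => (hstep n).le
  obtain ⟨N, hN⟩ := hnoeth (fun n => (f n).1) (fun n => hS (f n).2) hmono
  exact (hstep N).ne ((hN (N+1) (Nat.le_succ N)).symm)

private lemma CS.exists_decomp (C : ConservativeSystem R)
    (hrad : C.IsRadicalSystem) (hdiv : C.IsDivisible) (hnoeth : C.IsNoetherianSystem) :
    ∀ J ∈ C.carrier, ∃ S : Finset (Ideal R),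
      (∀ P ∈ S, P ∈ C.carrier ∧ P.IsPrime) ∧ J = S.inf id := by
  classical
  by_contra hcon
  push_neg at hcon
  obtain ⟨J0, hJ0c, hJ0⟩ := hcon
  set Bad : Set (Ideal R) := {J | J ∈ C.carrier ∧
    ∀ S : Finset (Ideal R), (∀ P ∈ S, P ∈ C.carrier ∧ P.IsPrime) → J ≠ S.inf id} with hBadDef
  have hBadC : Bad ⊆ C.carrier := fun J hJ => hJ.1
  obtain ⟨M, hMBad, hMmax⟩ := CS.exists_maximal C hnoeth Bad hBadC ⟨J0, hJ0c, hJ0⟩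
  obtain ⟨hMC, hMbad⟩ := hMBad
  have hMtop : M ≠ ⊤ := by
    intro htop
    exact hMbad (∅ : Finset (Ideal R)) (by simp) (by simp [htop])
  have hnp : ¬ M.IsPrime := by
    intro hp
    exact hMbad {M} (by intro P hP; rw [Finset.mem_singleton] at hP; subst hP; exact ⟨hMC, hp⟩)
      (by simp)
  rcases (Ideal.not_isPrime_iff.mp hnp).resolve_left hMtop with ⟨a, ha, b, hb, hab⟩
  set A : Ideal R := idealDiv M a with hAdef
  have hAC : A ∈ C.carrier := hdiv M hMC a
  have hMA : M ≤ A := fun x hx => M.mul_mem_right a hx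
  have hbA : b ∈ A := show b * a ∈ M by rwa [mul_comm]
  set B : Ideal R := C.gen (↑M ∪ {a}) with hBdef
  have hBC : B ∈ C.carrier := C.sInf_mem _ (fun I hI => hI.1)
  have hMB : M ≤ B := le_sInf fun I hI x hx => hI.2 (Set.mem_union_left _ hx)
  have haB : a ∈ B := Ideal.mem_sInf.mpr fun I hI => hI.2 (Set.mem_union_right _ (Set.mem_singleton a))
  have hMAB : M = A ⊓ B := by
    refine le_antisymm (le_inf hMA hMB) ?_
    intro x hx
    obtain ⟨hxA, hxB⟩ := Ideal.mem_inf.mp hx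
    have hKC : idealDiv M x ∈ C.carrier := hdiv M hMC x
    have hBK : B ≤ idealDiv M x := by
      apply sInf_le
      refine ⟨hKC, ?_⟩
      intro y hy
      rcases hy with hy | hy
      · exact M.mul_mem_right x hy
      · rw [Set.mem_singleton_iff] at hy
        subst hy
        show y * x ∈ M
        rwa [mul_comm]
    have hx2 : x * x ∈ M := hBK hxB
    exact hrad M hMC ⟨2, by rwa [pow_two]⟩
  have hdecA : ∃ SA : Finset (Ideal R), (∀ P ∈ SA, P ∈ C.carrier ∧ P.IsPrime) ∧ A = SA.inf id := by
    by_contra hA'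
    push_neg at hA'
    have hAbad : A ∈ Bad := ⟨hAC, fun S hS => hA' S hS⟩
    have : A = M := hMmax A hAbad hMA
    exact hb (this ▸ hbA)
  have hdecB : ∃ SB : Finset (Ideal R), (∀ P ∈ SB, P ∈ C.carrier ∧ P.IsPrime) ∧ B = SB.inf id := by
    by_contra hB'
    push_neg at hB'
    have hBbad : B ∈ Bad := ⟨hBC, fun S hS => hB' S hS⟩
    have : B = M := hMmax B hBbad hMB
    exact ha (this ▸ haB)
  obtain ⟨SA, hSA, hAeq⟩ := hdecA
  obtain ⟨SB, hSB, hBeq⟩ := hdecB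
  refine hMbad (SA ∪ SB) ?_ ?_
  · intro P hP
    rcases Finset.mem_union.mp hP with h | h
    · exact hSA P h
    · exact hSB P h
  · rw [Finset.inf_union, ← hAeq, ← hBeq, hMAB]

/-- Let `C` be a noetherian radical divisible conservative system of a
commutative ring `R`. Then every proper `C`-ideal `I` is the intersection of the (finite) set
of its `C`-components (the minimal prime `C`-ideals containing `I`), these are pairwise
incomparable, and any finite set of pairwise incomparable prime `C`-ideals whose intersection
is `I` equals the set of `C`-components of `I`. -/
theorem decomposition_of_radical_conservative (C : ConservativeSystem R)
    (hrad : C.IsRadicalSystem) (hdiv : C.IsDivisible)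
    (hnoeth : C.IsNoetherianSystem) (I : Ideal R) (hI : I ∈ C.carrier) (hproper : I ≠ ⊤) :
    letI Comp : Set (Ideal R) := {P : Ideal R | P ∈ C.carrier ∧ P.IsPrime ∧ I ≤ P ∧
      ∀ Q : Ideal R, Q ∈ C.carrier → Q.IsPrime → I ≤ Q → Q ≤ P → Q = P}
    Comp.Finite ∧ I = sInf Comp ∧
      (∀ P ∈ Comp, ∀ Q ∈ Comp, P ≠ Q → ¬ P ≤ Q) ∧
      (∀ T : Set (Ideal R), T.Finite →
        (∀ P ∈ T, P ∈ C.carrier ∧ P.IsPrime) →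
        (∀ P ∈ T, ∀ Q ∈ T, P ≠ Q → ¬ P ≤ Q) → I = sInf T → T = Comp) := by
  classical
  set Comp : Set (Ideal R) := {P : Ideal R | P ∈ C.carrier ∧ P.IsPrime ∧ I ≤ P ∧
      ∀ Q : Ideal R, Q ∈ C.carrier → Q.IsPrime → I ≤ Q → Q ≤ P → Q = P} with hCompDef
  obtain ⟨S, hS, hIS⟩ := CS.exists_decomp C hrad hdiv hnoeth I hI
  have hle : ∀ P ∈ S, I ≤ P := fun P hP => hIS ▸ Finset.inf_le hP
  have key : ∀ Q : Ideal R, Q.IsPrime → I ≤ Q → ∃ P ∈ S, P ≤ Q := by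
    intro Q hQ hIQ
    exact hQ.inf_le'.mp (hIS ▸ hIQ)
  have hminS : ∀ P ∈ S, (∀ P' ∈ S, P' ≤ P → P' = P) → P ∈ Comp := by
    intro P hP hmin
    refine ⟨(hS P hP).1, (hS P hP).2, hle P hP, ?_⟩
    intro Q hQC hQp hIQ hQP
    obtain ⟨P', hP', hP'Q⟩ := key Q hQp hIQ
    have hPP : P' = P := hmin P' hP' (hP'Q.trans hQP)
    subst hPP
    exact le_antisymm hQP hP'Q
  have hbelow : ∀ P ∈ S, ∃ M ∈ Comp, M ≤ P := by
    intro P hP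
    have hfin : ({Q : Ideal R | Q ∈ S ∧ Q ≤ P}).Finite :=
      S.finite_toSet.subset (fun Q hQ => hQ.1)
    obtain ⟨Mm, hMm, hmin⟩ : ∃ a ∈ {Q : Ideal R | Q ∈ S ∧ Q ≤ P},
        ∀ a' ∈ {Q : Ideal R | Q ∈ S ∧ Q ≤ P}, id a' ≤ id a → id a = id a' := by
      obtain ⟨a, ha, h⟩ := hfin.exists_minimalFor id _ ⟨P, hP, le_rfl⟩
      exact ⟨a, ha, fun a' ha' hle => le_antisymm (h ha' hle) hle⟩
    refine ⟨Mm, hminS Mm hMm.1 ?_, hMm.2⟩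
    intro P' hP' hP'M
    exact (hmin P' ⟨hP', le_trans hP'M hMm.2⟩ hP'M).symm
  have hComp : ∀ P ∈ Comp, P ∈ C.carrier ∧ P.IsPrime ∧ I ≤ P ∧
      ∀ Q : Ideal R, Q ∈ C.carrier → Q.IsPrime → I ≤ Q → Q ≤ P → Q = P := fun P hP => hP
  have hsub : Comp ⊆ ↑S := by
    intro P hPc
    obtain ⟨hPC, hPp, hIP, hPmin⟩ := hComp P hPc
    obtain ⟨P', hP', hP'P⟩ := key P hPp hIP
    have hPP : P' = P := hPmin P' (hS P' hP').1 (hS P' hP').2 (hle P' hP') hP'P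
    rw [← hPP]
    exact hP'
  have hfinComp : Comp.Finite := S.finite_toSet.subset hsub
  have hIComp : I = sInf Comp := by
    refine le_antisymm (le_sInf fun P hP => (hComp P hP).2.2.1) ?_
    rw [hIS]
    apply Finset.le_inf
    intro P hP
    obtain ⟨M, hM, hMP⟩ := hbelow P hP
    exact le_trans (sInf_le hM) hMP
  have hinc : ∀ P ∈ Comp, ∀ Q ∈ Comp, P ≠ Q → ¬ P ≤ Q := by
    intro P hP Q hQ hne hPQ
    exact hne ((hComp Q hQ).2.2.2 P (hComp P hP).1 (hComp P hP).2.1 (hComp P hP).2.2.1 hPQ)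
  refine ⟨hfinComp, hIComp, hinc, ?_⟩
  intro T hTfin hTp hTinc hIT
  have keyT : ∀ Q : Ideal R, Q.IsPrime → I ≤ Q → ∃ P ∈ T, P ≤ Q := by
    intro Q hQ hIQ
    have h1 : hTfin.toFinset.inf id ≤ Q := by
      rw [Finset.inf_id_eq_sInf, hTfin.coe_toFinset, ← hIT]
      exact hIQ
    obtain ⟨P, hP, hPQ⟩ := hQ.inf_le'.mp h1
    exact ⟨P, hTfin.mem_toFinset.mp hP, hPQ⟩
  have hCT : Comp ⊆ T := by
    intro P hPc
    obtain ⟨hPC, hPp, hIP, hPmin⟩ := hComp P hPc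
    obtain ⟨Q', hQ', hQ'P⟩ := keyT P hPp hIP
    have hIQ' : I ≤ Q' := hIT ▸ sInf_le hQ'
    have : Q' = P := hPmin Q' (hTp Q' hQ').1 (hTp Q' hQ').2 hIQ' hQ'P
    rw [← this]
    exact hQ'
  refine Set.Subset.antisymm ?_ hCT
  intro Q hQT
  have hIQ : I ≤ Q := hIT ▸ sInf_le hQT
  obtain ⟨P', hP', hP'Q⟩ := key Q (hTp Q hQT).2 hIQ
  obtain ⟨M, hM, hMP'⟩ := hbelow P' hP'
  have hMT : M ∈ T := hCT hM
  have hMQ : M ≤ Q := le_trans hMP' hP'Q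
  have : M = Q := by
    by_contra hne
    exact hTinc M hMT Q hQT hne hMQ
  rw [← this]
  exact hM
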